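/- Let σ : ℝ^d → ℝ^{d×m} and b : ℝ^d → ℝ^d be continuous, bounded, and satisfy hypothesis (H1). Let T > 0, x ∈ ℝ^d, and let g : [0,T] → ℝ^m be measurable with ∫₀^T |g(s)|² ds < ∞. Then there exists exactly one continuous function X : [0,T] → ℝ^d such that X(t) = x + ∫₀^t (σ(X(s))·g(s) + b(X(s))) ds for all t ∈ [0,T]. -/

import Mathlib

open MeasureTheory Set Filter Topology


/-- Matrix–vector multiplication, with Euclidean norms on the vector spaces. -/
noncomputable def mulVecE {d m : ℕ} (A : Matrix (Fin d) (Fin m) ℝ)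
    (v : EuclideanSpace ℝ (Fin m)) : EuclideanSpace ℝ (Fin d) :=
  WithLp.toLp 2 (fun i => ∑ j, A i j * v j)

/-- The Hilbert–Schmidt (Frobenius) norm of a real `d × m` matrix. -/
noncomputable def frobNorm {d m : ℕ} (A : Matrix (Fin d) (Fin m) ℝ) : ℝ :=
  Real.sqrt (∑ i, ∑ j, (A i j) ^ 2)

lemma frobNorm_nonneg {d m : ℕ} (A : Matrix (Fin d) (Fin m) ℝ) : 0 ≤ frobNorm A :=
  Real.sqrt_nonneg _

lemma mulVecE_sub {d m : ℕ} (A B : Matrix (Fin d) (Fin m) ℝ) (v : EuclideanSpace ℝ (Fin m)) :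
    mulVecE (A - B) v = mulVecE A v - mulVecE B v := by
  ext i
  show ∑ j, (A i j - B i j) * v j = (∑ j, A i j * v j) - ∑ j, B i j * v j
  simp [sub_mul, Finset.sum_sub_distrib]

lemma norm_mulVecE_le {d m : ℕ} (A : Matrix (Fin d) (Fin m) ℝ) (v : EuclideanSpace ℝ (Fin m)) :
    ‖mulVecE A v‖ ≤ frobNorm A * ‖v‖ := by
  have hv : ‖v‖ = Real.sqrt (∑ j, (v j) ^ 2) := by
    rw [EuclideanSpace.norm_eq]
    congr 1; apply Finset.sum_congr rfl; intro j _; rw [Real.norm_eq_abs, sq_abs]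
  have hA : ‖mulVecE A v‖ = Real.sqrt (∑ i, (∑ j, A i j * v j) ^ 2) := by
    rw [EuclideanSpace.norm_eq]
    apply congrArg; apply Finset.sum_congr rfl; intro i _
    rw [Real.norm_eq_abs, sq_abs]; unfold mulVecE; rfl
  rw [hA, hv, frobNorm, ← Real.sqrt_mul (by positivity)]
  apply Real.sqrt_le_sqrt
  rw [Finset.sum_mul]
  apply Finset.sum_le_sum
  intro i _
  exact Finset.sum_mul_sq_le_sq_mul_sq _ _ _

lemma continuous_mulVecE {d m : ℕ} (v : EuclideanSpace ℝ (Fin m)) :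
    Continuous fun A : Matrix (Fin d) (Fin m) ℝ => mulVecE A v := by
  have : Continuous fun A : Matrix (Fin d) (Fin m) ℝ => (fun i => ∑ j, A i j * v j : Fin d → ℝ) := by
    apply continuous_pi; intro i
    exact continuous_finset_sum _ fun j _ =>
      (Continuous.matrix_elem continuous_id i j).mul continuous_const
  exact (EuclideanSpace.equiv (Fin d) ℝ).symm.continuous.comp this


/-- Hypothesis (H1): there are `C > 0` and `μ > 0` (given here as parameters) such that
for every real `N > e` and all `x, y` with `|x| ≤ N`, `|y| ≤ N`,
`‖σ x - σ y‖ ≤ C √(log N) |x - y| + C (log N) / N ^ μ` and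
`|b x - b y| ≤ C (log N) |x - y| + C (log N) / N ^ μ`. -/
def HypH1 {d m : ℕ} (σ : EuclideanSpace ℝ (Fin d) → Matrix (Fin d) (Fin m) ℝ)
    (b : EuclideanSpace ℝ (Fin d) → EuclideanSpace ℝ (Fin d)) (C μ : ℝ) : Prop :=
  ∀ N : ℝ, Real.exp 1 < N → ∀ x y : EuclideanSpace ℝ (Fin d),
    ‖x‖ ≤ N → ‖y‖ ≤ N →
      frobNorm (σ x - σ y) ≤ C * Real.sqrt (Real.log N) * ‖x - y‖ +
        C * Real.log N / N ^ μ ∧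
      ‖b x - b y‖ ≤ C * Real.log N * ‖x - y‖ + C * Real.log N / N ^ μ

lemma gronwall_pair (u v : ℝ) (huv : u ≤ v) (κ' : ℝ → ℝ)
    (hκi : IntervalIntegrable κ' volume u v) (hκ0 : ∀ s, 0 ≤ κ' s)
    (h : ℝ → ℝ) (hh : ContinuousOn h (Set.Icc u v)) (hh0 : ∀ t ∈ Set.Icc u v, 0 ≤ h t)
    (a : ℝ) (ha : 0 ≤ a)
    (hineq : ∀ t ∈ Set.Icc u v, h t ≤ a + ∫ s in u..t, κ' s * h s) :
    ∀ n : ℕ, ∀ t ∈ Set.Icc u v, (∫ s in u..t, κ' s) ≤ (n + 1) / 2 →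
      h t ≤ 2 * a * 2 ^ n ∧ (∫ s in u..t, κ' s * h s) ≤ a * (2 ^ (n + 1) - 1) := by
  have huv' : Set.uIcc u v = Set.Icc u v := Set.uIcc_of_le huv
  have hsub : ∀ c d : ℝ, c ∈ Set.Icc u v → d ∈ Set.Icc u v →
      Set.uIcc c d ⊆ Set.uIcc u v := by
    intro c d hc hd
    rw [huv']
    exact Set.uIcc_subset_Icc hc hd
  have hκi' : ∀ c d : ℝ, c ∈ Set.Icc u v → d ∈ Set.Icc u v →
      IntervalIntegrable κ' volume c d := fun c d hc hd => hκi.mono_set (hsub c d hc hd)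
  have hκhi : ∀ c d : ℝ, c ∈ Set.Icc u v → d ∈ Set.Icc u v →
      IntervalIntegrable (fun s => κ' s * h s) volume c d := fun c d hc hd =>
    (hκi' c d hc hd).mul_continuousOn (hh.mono ((hsub c d hc hd).trans huv'.subset))
  have humem : u ∈ Set.Icc u v := ⟨le_rfl, huv⟩
  set K : ℝ → ℝ := fun t => ∫ s in u..t, κ' s with hKdef
  have hKu : K u = 0 := intervalIntegral.integral_same
  have Kadd : ∀ c d : ℝ, c ∈ Set.Icc u v → d ∈ Set.Icc u v →
      (∫ s in c..d, κ' s) = K d - K c := by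
    intro c d hc hd
    have := intervalIntegral.integral_add_adjacent_intervals (hκi' u c humem hc)
      (hκi' c d hc hd)
    simp only [hKdef]
    linarith [this]
  have Hadd : ∀ c d : ℝ, c ∈ Set.Icc u v → d ∈ Set.Icc u v →
      (∫ s in c..d, κ' s * h s) =
        (∫ s in u..d, κ' s * h s) - ∫ s in u..c, κ' s * h s := by
    intro c d hc hd
    have := intervalIntegral.integral_add_adjacent_intervals (hκhi u c humem hc)
      (hκhi c d hc hd)
    linarith [this]
  have Kmono : ∀ c d : ℝ, c ∈ Set.Icc u v → d ∈ Set.Icc u v → c ≤ d → K c ≤ K d := by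
    intro c d hc hd hcd
    have h0 : 0 ≤ ∫ s in c..d, κ' s :=
      intervalIntegral.integral_nonneg hcd (fun s _ => hκ0 s)
    rw [Kadd c d hc hd] at h0
    linarith
  have intbd : ∀ c d B : ℝ, c ∈ Set.Icc u v → d ∈ Set.Icc u v → c ≤ d → 0 ≤ B →
      (∀ s ∈ Set.Icc c d, h s ≤ B) →
      (∫ s in c..d, κ' s * h s) ≤ B * (K d - K c) := by
    intro c d B hc hd hcd hB hhB
    have h1 : (∫ s in c..d, κ' s * h s) ≤ ∫ s in c..d, κ' s * B := by
      refine intervalIntegral.integral_mono_on hcd (hκhi c d hc hd)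
        ((hκi' c d hc hd).mul_const B) (fun s hs => ?_)
      exact mul_le_mul_of_nonneg_left (hhB s hs) (hκ0 s)
    rw [intervalIntegral.integral_mul_const, Kadd c d hc hd] at h1
    linarith
  have hκIcc : IntegrableOn κ' (Set.uIcc u v) volume := by
    rw [huv', integrableOn_Icc_iff_integrableOn_Ioc]
    exact hκi.1
  have Kcont : ContinuousOn K (Set.Icc u v) := by
    have := intervalIntegral.continuousOn_primitive_interval hκIcc
    rwa [huv'] at this
  intro n
  induction n with
  | zero =>
    intro t ht hKt
    obtain ⟨tm, htm, hmax⟩ := (isCompact_Icc : IsCompact (Set.Icc u t)).exists_isMaxOn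
      (Set.nonempty_Icc.2 ht.1) (hh.mono (Set.Icc_subset_Icc le_rfl ht.2))
    have htm' : tm ∈ Set.Icc u v := ⟨htm.1, htm.2.trans ht.2⟩
    have hhtm : 0 ≤ h tm := hh0 tm htm'
    have hKtm : K tm ≤ 1 / 2 := by
      have := Kmono tm t htm' ht htm.2
      simpa using this.trans (by simpa using hKt)
    have h2 : (∫ s in u..tm, κ' s * h s) ≤ h tm * (K tm - K u) :=
      intbd u tm (h tm) humem htm' htm.1 hhtm
        (fun s hs => hmax (Set.Icc_subset_Icc le_rfl htm.2 hs))
    have h1 : h tm ≤ a + h tm * (K tm - K u) := le_trans (hineq tm htm') (by linarith)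
    have h3 : h tm ≤ 2 * a := by nlinarith
    refine ⟨?_, ?_⟩
    · have ht2 : h t ≤ h tm := hmax ⟨ht.1, le_rfl⟩
      simp only [pow_zero, mul_one]
      linarith
    · have h4 : (∫ s in u..t, κ' s * h s) ≤ h tm * (K t - K u) :=
        intbd u t (h tm) humem ht ht.1 hhtm (fun s hs => hmax hs)
      have hKt' : K t ≤ 1 / 2 := by simpa using hKt
      have h5 : h tm * (K t - K u) ≤ 2 * a * (1 / 2) := by nlinarith
      norm_num
      linarith
  | succ n ih =>
    intro t ht hKt
    have hp : (0:ℝ) < 2 ^ n := by positivity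
    by_cases hc : K t ≤ (n + 1) / 2
    · obtain ⟨h1, h2⟩ := ih t ht hc
      have e1 : (2:ℝ) ^ (n+1) = 2 ^ n * 2 := pow_succ 2 n
      have e2 : (2:ℝ) ^ (n+2) = 2 ^ (n+1) * 2 := pow_succ 2 (n+1)
      constructor
      · nlinarith
      · nlinarith
    · push_neg at hc
      have hmemI : ((n:ℝ) + 1) / 2 ∈ Set.Icc (K u) (K t) := by
        constructor
        · rw [hKu]; positivity
        · exact hc.le
      obtain ⟨w, hw, hKw⟩ := intermediate_value_Icc ht.1
        (Kcont.mono (Set.Icc_subset_Icc le_rfl ht.2)) hmemI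
      have hw' : w ∈ Set.Icc u v := ⟨hw.1, hw.2.trans ht.2⟩
      obtain ⟨ihw1, ihw2⟩ := ih w hw' (le_of_eq hKw)
      obtain ⟨tm, htm, hmax⟩ := (isCompact_Icc : IsCompact (Set.Icc u t)).exists_isMaxOn
        (Set.nonempty_Icc.2 ht.1) (hh.mono (Set.Icc_subset_Icc le_rfl ht.2))
    -- htm : tm ∈ Icc u t
      have htm' : tm ∈ Set.Icc u v := ⟨htm.1, htm.2.trans ht.2⟩
      have hhtm : 0 ≤ h tm := hh0 tm htm'
      have hKt' : K t ≤ ((n:ℝ) + 2) / 2 := by push_cast at hKt; linarith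
      have hKtKw : K t - K w ≤ 1 / 2 := by rw [hKw]; linarith
      have e1 : (2:ℝ) ^ (n+1) = 2 ^ n * 2 := pow_succ 2 n
      have e2 : (2:ℝ) ^ (n+2) = 2 ^ (n+1) * 2 := pow_succ 2 (n+1)
      have hbm : h tm ≤ 2 * a * 2 ^ (n + 1) := by
        rcases le_total tm w with hle | hge
        · have hKtm : K tm ≤ ((n:ℝ) + 1) / 2 := by
            rw [← hKw]; exact Kmono tm w htm' hw' hle
          have := (ih tm htm' hKtm).1
          nlinarith
        · have i1 : h tm ≤ a + ∫ s in u..tm, κ' s * h s := hineq tm htm'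
          have i2 : (∫ s in u..tm, κ' s * h s) =
              (∫ s in u..w, κ' s * h s) + ∫ s in w..tm, κ' s * h s :=
            (intervalIntegral.integral_add_adjacent_intervals (hκhi u w humem hw')
              (hκhi w tm hw' htm')).symm
          have i3 : (∫ s in w..tm, κ' s * h s) ≤ h tm * (K tm - K w) :=
            intbd w tm (h tm) hw' htm' hge
              hhtm (fun s hs => hmax ⟨hw.1.trans hs.1, hs.2.trans htm.2⟩)
          have i4 : K tm - K w ≤ 1 / 2 := by
            have := Kmono tm t htm' ht htm.2
            linarith
          nlinarith
      constructor
      · have ht2 : h t ≤ h tm := hmax ⟨ht.1, le_rfl⟩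
        linarith
      · have i2 : (∫ s in u..t, κ' s * h s) =
            (∫ s in u..w, κ' s * h s) + ∫ s in w..t, κ' s * h s :=
          (intervalIntegral.integral_add_adjacent_intervals (hκhi u w humem hw')
            (hκhi w t hw' ht)).symm
        have i3 : (∫ s in w..t, κ' s * h s) ≤ h tm * (K t - K w) :=
          intbd w t (h tm) hw' ht hw.2 hhtm
            (fun s hs => hmax ⟨hw.1.trans hs.1, hs.2⟩)
        nlinarith

lemma continuous_of_integral_mod {G : Type*} [NormedAddCommGroup G] {mf : ℝ → ℝ}
    (hmf : Continuous mf) (c : ℝ) (hc : 0 ≤ c) {h : ℝ → G}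
    (hmod : ∀ t' t : ℝ, t' ≤ t → ‖h t - h t'‖ ≤ c * (mf t - mf t')) : Continuous h := by
  rw [Metric.continuous_iff]
  intro t ε hε
  have hc1 : 0 < c + 1 := by linarith
  have hε' : 0 < ε / (c + 1) := by positivity
  obtain ⟨δ, hδ, hδ'⟩ := Metric.continuous_iff.mp hmf t (ε / (c + 1)) hε'
  refine ⟨δ, hδ, fun a hat => ?_⟩
  have key : ∀ s r : ℝ, s ≤ r → dist (mf s) (mf r) < ε / (c + 1) → dist (h s) (h r) < ε := by
    intro s r hsr hd
    have h1 : ‖h r - h s‖ ≤ c * (mf r - mf s) := hmod s r hsr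
    have h2 : mf r - mf s ≤ |mf s - mf r| := by
      rw [abs_sub_comm]; exact le_abs_self _
    rw [Real.dist_eq] at hd
    have h3 : c * (mf r - mf s) ≤ c * (ε / (c + 1)) :=
      mul_le_mul_of_nonneg_left (h2.trans hd.le) hc
    have h4 : c * (ε / (c + 1)) < ε := by
      rw [mul_div_assoc'] at *
      rw [div_lt_iff₀ hc1]
      nlinarith
    rw [dist_eq_norm, norm_sub_rev]
    linarith
  rcases le_total a t with hat' | hat'
  · exact key a t hat' (hδ' a hat)
  · rw [dist_comm (h a) (h t)]
    rw [dist_comm a t] at hat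
    exact key t a hat' (by rw [dist_comm]; exact hδ' a (by rwa [dist_comm]))

lemma ode_local {E : Type*} [NormedAddCommGroup E] [NormedSpace ℝ E] [CompleteSpace E]
    (T : ℝ) (V : E → ℝ → E) (κ : ℝ → ℝ) (hκ1 : ∀ s, (1:ℝ) ≤ κ s)
    (hκint : IntervalIntegrable κ volume 0 T)
    (hVcont : ∀ s, Continuous fun z => V z s)
    (hVint : ∀ f : ℝ → E, Continuous f →
      IntervalIntegrable (fun s => V (f s) s) volume 0 T)
    (M : ℝ) (hM : 0 ≤ M) (hVbd : ∀ z s, ‖V z s‖ ≤ M * κ s)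
    (R : ℝ)
    (L ε : ℕ → ℝ) (hL : ∀ n, 0 ≤ L n) (hε : ∀ n, 0 ≤ ε n)
    (hdiff : ∀ (n : ℕ) (z w : E) (s : ℝ), ‖z‖ ≤ R → ‖w‖ ≤ R →
      ‖V z s - V w s‖ ≤ L n * κ s * ‖z - w‖ + ε n * κ s)
    (Q₀ : ℝ) (hQ₀ : 0 ≤ Q₀)
    (hsmall : Tendsto (fun n => ε n * (2:ℝ) ^ (2 * L n * Q₀ + 2)) atTop (𝓝 0))
    (u v : ℝ) (hu : 0 ≤ u) (huv : u ≤ v) (hvT : v ≤ T)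
    (hQ : (∫ s in u..v, κ s) ≤ Q₀)
    (ξ : E) (hξ : ‖ξ‖ + M * (∫ s in u..v, κ s) ≤ R) :
    ∃! f : ℝ → E, Continuous f ∧ (∀ t, f t = f (max u (min v t))) ∧
      ∀ t ∈ Set.Icc u v, f t = ξ + ∫ s in u..t, V (f s) s := by
  classical
  have h0T : (0:ℝ) ≤ T := hu.trans (huv.trans hvT)
  set cl : ℝ → ℝ := fun t => max u (min v t) with hcl
  have hclmem : ∀ t, cl t ∈ Set.Icc u v := fun t =>
    ⟨le_max_left _ _, max_le huv (min_le_left _ _)⟩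
  have hclid : ∀ t ∈ Set.Icc u v, cl t = t := by
    intro t ht
    simp only [hcl]
    rw [min_eq_right ht.2, max_eq_right ht.1]
  have hclcl : ∀ t, cl (cl t) = cl t := fun t => hclid _ (hclmem t)
  have hclcont : Continuous cl := continuous_const.max (continuous_const.min continuous_id)
  have hclmono : Monotone cl := fun s t hst => max_le_max le_rfl (min_le_min le_rfl hst)
  have hmemuv : ∀ {c : ℝ}, c ∈ Set.Icc u v → c ∈ Set.Icc 0 T := fun hc =>
    ⟨hu.trans hc.1, hc.2.trans hvT⟩
  have hsubT : ∀ c d : ℝ, c ∈ Set.Icc u v → d ∈ Set.Icc u v →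
      Set.uIcc c d ⊆ Set.uIcc 0 T := by
    intro c d hc hd
    rw [Set.uIcc_of_le h0T]
    exact Set.uIcc_subset_Icc (hmemuv hc) (hmemuv hd)
  have humem : u ∈ Set.Icc u v := ⟨le_rfl, huv⟩
  have hvmem : v ∈ Set.Icc u v := ⟨huv, le_rfl⟩
  have hκ0 : ∀ s, 0 ≤ κ s := fun s => zero_le_one.trans (hκ1 s)
  have hκi' : ∀ c d : ℝ, c ∈ Set.Icc u v → d ∈ Set.Icc u v →
      IntervalIntegrable κ volume c d := fun c d hc hd => hκint.mono_set (hsubT c d hc hd)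
  have hVi' : ∀ (f : ℝ → E), Continuous f → ∀ c d : ℝ, c ∈ Set.Icc u v → d ∈ Set.Icc u v →
      IntervalIntegrable (fun s => V (f s) s) volume c d := fun f hf c d hc hd =>
    (hVint f hf).mono_set (hsubT c d hc hd)
  set Kuv : ℝ := ∫ s in u..v, κ s with hKuvdef
  have hKuv0 : 0 ≤ Kuv := intervalIntegral.integral_nonneg huv (fun s _ => hκ0 s)
  have hMK : 0 ≤ M * Kuv := mul_nonneg hM hKuv0
  have hRξ : ‖ξ‖ ≤ R := by linarith
  have hR0 : 0 ≤ R := (norm_nonneg ξ).trans hRξ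
  set K : ℝ → ℝ := fun r => ∫ s in u..r, κ s with hKdef
  have hKu : K u = 0 := intervalIntegral.integral_same
  have Kadd : ∀ c d : ℝ, c ∈ Set.Icc u v → d ∈ Set.Icc u v →
      (∫ s in c..d, κ s) = K d - K c := by
    intro c d hc hd
    have := intervalIntegral.integral_add_adjacent_intervals (hκi' u c humem hc)
      (hκi' c d hc hd)
    simp only [hKdef]
    linarith
  have Kmono : ∀ c d : ℝ, c ∈ Set.Icc u v → d ∈ Set.Icc u v → c ≤ d → K c ≤ K d := by
    intro c d hc hd hcd
    have h0 : 0 ≤ ∫ s in c..d, κ s := intervalIntegral.integral_nonneg hcd (fun s _ => hκ0 s)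
    rw [Kadd c d hc hd] at h0
    linarith
  have hKv : K v = Kuv := rfl
  have hκIcc : IntegrableOn κ (Set.uIcc u v) volume := by
    rw [Set.uIcc_of_le huv, integrableOn_Icc_iff_integrableOn_Ioc]
    exact (hκi' u v humem hvmem).1
  have Kcont : ContinuousOn K (Set.Icc u v) := by
    have := intervalIntegral.continuousOn_primitive_interval hκIcc
    rwa [Set.uIcc_of_le huv] at this
  set mκ : ℝ → ℝ := fun t => K (cl t) with hmκdef
  have hmκcont : Continuous mκ := Kcont.comp_continuous hclcont hclmem
  have hmκmono : Monotone mκ := fun s t h => Kmono _ _ (hclmem s) (hclmem t) (hclmono h)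
  -- the Picard map
  set P : (ℝ → E) → ℝ → E := fun f t => ξ + ∫ s in u..cl t, V (f s) s with hP
  have hPcl : ∀ f t, P f t = P f (cl t) := by
    intro f t
    simp only [hP, hclcl]
  have hPnorm : ∀ (f : ℝ → E), Continuous f → ∀ t' t : ℝ, t' ≤ t →
      ‖P f t - P f t'‖ ≤ M * (mκ t - mκ t') := by
    intro f hf t' t ht
    have hmem1 := hclmem t'
    have hmem2 := hclmem t
    have hcle : cl t' ≤ cl t := hclmono ht
    have hsplit := intervalIntegral.integral_add_adjacent_intervals
      (hVi' f hf u (cl t') humem hmem1) (hVi' f hf (cl t') (cl t) hmem1 hmem2)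
    have e1 : P f t - P f t' = ∫ s in (cl t')..(cl t), V (f s) s := by
      simp only [hP]
      rw [← hsplit]
      abel
    rw [e1]
    have hb : ‖∫ s in (cl t')..(cl t), V (f s) s‖ ≤ |∫ s in (cl t')..(cl t), M * κ s| :=
      intervalIntegral.norm_integral_le_abs_of_norm_le
        (Filter.Eventually.of_forall fun s => hVbd (f s) s)
        ((hκi' _ _ hmem1 hmem2).const_mul M)
    have e2 : (∫ s in (cl t')..(cl t), M * κ s) = M * (mκ t - mκ t') := by
      rw [intervalIntegral.integral_const_mul, Kadd _ _ hmem1 hmem2]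
    have e3 : 0 ≤ M * (mκ t - mκ t') :=
      mul_nonneg hM (sub_nonneg.2 (hmκmono ht))
    rw [e2, abs_of_nonneg e3] at hb
    exact hb
  have hPbd : ∀ (f : ℝ → E), Continuous f → ∀ t, ‖P f t‖ ≤ R := by
    intro f hf t
    have hmem := hclmem t
    have hb : ‖∫ s in u..(cl t), V (f s) s‖ ≤ |∫ s in u..(cl t), M * κ s| :=
      intervalIntegral.norm_integral_le_abs_of_norm_le
        (Filter.Eventually.of_forall fun s => hVbd (f s) s)
        ((hκi' _ _ humem hmem).const_mul M)
    have e2 : (∫ s in u..(cl t), M * κ s) = M * K (cl t) := by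
      rw [intervalIntegral.integral_const_mul, Kadd _ _ humem hmem, hKu, sub_zero]
    have e3 : K (cl t) ≤ Kuv := Kmono _ _ hmem hvmem (hclmem t).2
    have e4 : 0 ≤ M * K (cl t) := by
      have := Kmono u (cl t) humem hmem (hclmem t).1
      rw [hKu] at this
      exact mul_nonneg hM this
    rw [e2, abs_of_nonneg e4] at hb
    calc ‖P f t‖ ≤ ‖ξ‖ + ‖∫ s in u..(cl t), V (f s) s‖ := norm_add_le _ _
      _ ≤ ‖ξ‖ + M * K (cl t) := by linarith
      _ ≤ ‖ξ‖ + M * Kuv := by nlinarith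
      _ ≤ R := hξ
  have hPcont : ∀ (f : ℝ → E), Continuous f → Continuous (P f) := by
    intro f hf
    have hprim : ContinuousOn (fun r => ∫ s in u..r, V (f s) s) (Set.Icc u v) := by
      have hint : IntegrableOn (fun s => V (f s) s) (Set.uIcc u v) volume := by
        rw [Set.uIcc_of_le huv, integrableOn_Icc_iff_integrableOn_Ioc]
        exact (hVi' f hf u v humem hvmem).1
      have := intervalIntegral.continuousOn_primitive_interval hint
      rwa [Set.uIcc_of_le huv] at this
    have : Continuous fun t => ∫ s in u..(cl t), V (f s) s :=
      hprim.comp_continuous hclcont hclmem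
    exact continuous_const.add this
  -- Picard iterates
  set F : ℕ → ℝ → E := fun n => P^[n] (fun _ => ξ) with hF
  have hFsucc : ∀ n, F (n + 1) = P (F n) := by
    intro n
    simp only [hF, Function.iterate_succ_apply']
  have hFprop : ∀ n, Continuous (F n) ∧ (∀ t, ‖F n t‖ ≤ R) ∧ (∀ t, F n t = F n (cl t)) := by
    intro n
    induction n with
    | zero => exact ⟨continuous_const, fun t => hRξ, fun t => rfl⟩
    | succ n ih =>
      rw [hFsucc]
      exact ⟨hPcont _ ih.1, hPbd _ ih.1, hPcl _⟩
  have hFcont : ∀ n, Continuous (F n) := fun n => (hFprop n).1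
  have hFbd : ∀ n t, ‖F n t‖ ≤ R := fun n => (hFprop n).2.1
  have hFcl : ∀ n t, F n t = F n (cl t) := fun n => (hFprop n).2.2
  have hFmod : ∀ n (t' t : ℝ), t' ≤ t → ‖F n t - F n t'‖ ≤ M * (mκ t - mκ t') := by
    intro n t' t ht
    cases n with
    | zero =>
      simp only [hF, Function.iterate_zero_apply, sub_self, norm_zero]
      exact mul_nonneg hM (sub_nonneg.2 (hmκmono ht))
    | succ n =>
      rw [hFsucc]
      exact hPnorm _ (hFcont n) t' t ht
  -- the sup-differences
  have hbdd : ∀ n t, BddAbove (Set.range fun p : ℕ × ℕ => ‖F (n + p.1) t - F (n + p.2) t‖) := by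
    intro n t
    refine ⟨2 * R, ?_⟩
    rintro _ ⟨p, rfl⟩
    calc ‖F (n + p.1) t - F (n + p.2) t‖ ≤ ‖F (n + p.1) t‖ + ‖F (n + p.2) t‖ :=
          norm_sub_le _ _
      _ ≤ 2 * R := by linarith [hFbd (n + p.1) t, hFbd (n + p.2) t]
  set ψ : ℕ → ℝ → ℝ := fun n t => ⨆ p : ℕ × ℕ, ‖F (n + p.1) t - F (n + p.2) t‖ with hψ
  have hψled : ∀ n t (p : ℕ × ℕ), ‖F (n + p.1) t - F (n + p.2) t‖ ≤ ψ n t := by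
    intro n t p
    exact le_ciSup (hbdd n t) p
  have hψ0 : ∀ n t, 0 ≤ ψ n t := by
    intro n t
    have := hψled n t (0, 0)
    simpa using this
  have hψle2R : ∀ n t, ψ n t ≤ 2 * R := by
    intro n t
    refine ciSup_le fun p => ?_
    calc ‖F (n + p.1) t - F (n + p.2) t‖ ≤ ‖F (n + p.1) t‖ + ‖F (n + p.2) t‖ := norm_sub_le _ _
      _ ≤ 2 * R := by linarith [hFbd (n + p.1) t, hFbd (n + p.2) t]
  have hψanti : ∀ n t, ψ (n + 1) t ≤ ψ n t := by
    intro n t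
    refine ciSup_le fun p => ?_
    have h := hψled n t (p.1 + 1, p.2 + 1)
    have e1 : n + (p.1 + 1) = n + 1 + p.1 := by omega
    have e2 : n + (p.2 + 1) = n + 1 + p.2 := by omega
    simpa [e1, e2] using h
  have hψcl : ∀ n t, ψ n t = ψ n (cl t) := by
    intro n t
    simp only [hψ]
    congr 1
    funext p
    rw [hFcl (n + p.1) t, hFcl (n + p.2) t]
  have hψmod : ∀ n (t' t : ℝ), t' ≤ t → ψ n t ≤ ψ n t' + 2 * M * (mκ t - mκ t') := by
    intro n t' t ht
    refine ciSup_le fun p => ?_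
    have e : F (n + p.1) t - F (n + p.2) t =
        (F (n + p.1) t' - F (n + p.2) t') + (F (n + p.1) t - F (n + p.1) t')
          - (F (n + p.2) t - F (n + p.2) t') := by abel
    calc ‖F (n + p.1) t - F (n + p.2) t‖
        ≤ ‖(F (n + p.1) t' - F (n + p.2) t') + (F (n + p.1) t - F (n + p.1) t')‖ +
            ‖F (n + p.2) t - F (n + p.2) t'‖ := by rw [e]; exact norm_sub_le _ _
      _ ≤ ‖F (n + p.1) t' - F (n + p.2) t'‖ + ‖F (n + p.1) t - F (n + p.1) t'‖ +
            ‖F (n + p.2) t - F (n + p.2) t'‖ := by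
          have := norm_add_le (F (n + p.1) t' - F (n + p.2) t') (F (n + p.1) t - F (n + p.1) t')
          linarith
      _ ≤ ψ n t' + 2 * M * (mκ t - mκ t') := by
          have h1 := hψled n t' p
          have h2 := hFmod (n + p.1) t' t ht
          have h3 := hFmod (n + p.2) t' t ht
          linarith
  have hψmod' : ∀ n (t' t : ℝ), t' ≤ t → ‖ψ n t - ψ n t'‖ ≤ 2 * M * (mκ t - mκ t') := by
    intro n t' t ht
    rw [Real.norm_eq_abs, abs_sub_le_iff]
    constructor
    · have := hψmod n t' t ht
      linarith
    · -- ψ n t' ≤ ψ n t + 2M(mκ t - mκ t')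
      refine sub_le_iff_le_add.2 ?_
      refine (ciSup_le fun p => ?_)
      have e : F (n + p.1) t' - F (n + p.2) t' =
          (F (n + p.1) t - F (n + p.2) t) - (F (n + p.1) t - F (n + p.1) t')
            + (F (n + p.2) t - F (n + p.2) t') := by abel
      calc ‖F (n + p.1) t' - F (n + p.2) t'‖
          ≤ ‖(F (n + p.1) t - F (n + p.2) t) - (F (n + p.1) t - F (n + p.1) t')‖ +
              ‖F (n + p.2) t - F (n + p.2) t'‖ := by rw [e]; exact norm_add_le _ _
        _ ≤ ‖F (n + p.1) t - F (n + p.2) t‖ + ‖F (n + p.1) t - F (n + p.1) t'‖ +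
              ‖F (n + p.2) t - F (n + p.2) t'‖ := by
            have := norm_sub_le (F (n + p.1) t - F (n + p.2) t) (F (n + p.1) t - F (n + p.1) t')
            linarith
        _ ≤ ψ n t + 2 * M * (mκ t - mκ t') := by
            have h1 := hψled n t p
            have h2 := hFmod (n + p.1) t' t ht
            have h3 := hFmod (n + p.2) t' t ht
            linarith
        _ = 2 * M * (mκ t - mκ t') + ψ n t := by ring
  have hψcont : ∀ n, Continuous (ψ n) :=
    fun n => continuous_of_integral_mod hmκcont (2 * M) (by linarith) (hψmod' n)
  have hψrec : ∀ (j n : ℕ), ∀ t ∈ Set.Icc u v,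
      ψ (n + 1) t ≤ ε j * Kuv + ∫ s in u..t, (L j * κ s) * ψ n s := by
    intro j n t ht
    have hut : u ≤ t := ht.1
    have hiψ : IntervalIntegrable (fun s => (L j * κ s) * ψ n s) volume u t :=
      ((hκi' u t humem ht).const_mul _).mul_continuousOn ((hψcont n).continuousOn)
    have hiε : IntervalIntegrable (fun s => ε j * κ s) volume u t :=
      (hκi' u t humem ht).const_mul _
    refine ciSup_le fun p => ?_
    have e1 : ∀ q : ℕ, F (n + 1 + q) t = ξ + ∫ s in u..t, V (F (n + q) s) s := by
      intro q
      have hq : n + 1 + q = (n + q) + 1 := by omega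
      rw [hq, hFsucc]
      simp only [hP]
      rw [hclid t ht]
    have hVqi : ∀ q : ℕ, IntervalIntegrable (fun s => V (F (n + q) s) s) volume u t :=
      fun q => hVi' _ (hFcont (n + q)) u t humem ht
    have e2 : F (n + 1 + p.1) t - F (n + 1 + p.2) t
        = ∫ s in u..t, (V (F (n + p.1) s) s - V (F (n + p.2) s) s) := by
      rw [e1 p.1, e1 p.2, intervalIntegral.integral_sub (hVqi p.1) (hVqi p.2)]
      abel
    rw [e2]
    have hb : ‖∫ s in u..t, (V (F (n + p.1) s) s - V (F (n + p.2) s) s)‖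
        ≤ |∫ s in u..t, ((L j * κ s) * ψ n s + ε j * κ s)| := by
      refine intervalIntegral.norm_integral_le_abs_of_norm_le
        (Filter.Eventually.of_forall fun s => ?_) (hiψ.add hiε)
      calc ‖V (F (n + p.1) s) s - V (F (n + p.2) s) s‖
          ≤ L j * κ s * ‖F (n + p.1) s - F (n + p.2) s‖ + ε j * κ s :=
            hdiff j _ _ s (hFbd _ s) (hFbd _ s)
        _ ≤ (L j * κ s) * ψ n s + ε j * κ s := by
            have h1 := hψled n s p
            have hLκ : 0 ≤ L j * κ s := mul_nonneg (hL j) (hκ0 s)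
            nlinarith
    have habs : |∫ s in u..t, ((L j * κ s) * ψ n s + ε j * κ s)|
        = ∫ s in u..t, ((L j * κ s) * ψ n s + ε j * κ s) := by
      refine abs_of_nonneg (intervalIntegral.integral_nonneg hut fun s _ => ?_)
      exact add_nonneg (mul_nonneg (mul_nonneg (hL j) (hκ0 s)) (hψ0 n s))
        (mul_nonneg (hε j) (hκ0 s))
    rw [habs, intervalIntegral.integral_add hiψ hiε, intervalIntegral.integral_const_mul] at hb
    have hκb : (∫ s in u..t, κ s) ≤ Kuv := Kmono t v ht hvmem ht.2
    have hεb : ε j * (∫ s in u..t, κ s) ≤ ε j * Kuv := mul_le_mul_of_nonneg_left hκb (hε j)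
    linarith [hb]
  have hbddb : ∀ t, BddBelow (Set.range fun n => ψ n t) := fun t =>
    ⟨0, by rintro _ ⟨n, rfl⟩; exact hψ0 n t⟩
  set φ : ℝ → ℝ := fun t => ⨅ n, ψ n t with hφ
  have hφle : ∀ (n : ℕ) (t : ℝ), φ t ≤ ψ n t := fun n t => ciInf_le (hbddb t) n
  have hφ0 : ∀ t, 0 ≤ φ t := fun t => le_ciInf fun n => hψ0 n t
  have hφtend : ∀ t, Tendsto (fun n => ψ n t) atTop (𝓝 (φ t)) := fun t =>
    tendsto_atTop_ciInf (antitone_nat_of_succ_le fun n => hψanti n t) (hbddb t)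
  have hφmod' : ∀ t' t : ℝ, t' ≤ t → ‖φ t - φ t'‖ ≤ 2 * M * (mκ t - mκ t') := by
    intro t' t ht
    rw [Real.norm_eq_abs, abs_sub_le_iff]
    constructor
    · have hkey : φ t - 2 * M * (mκ t - mκ t') ≤ φ t' := le_ciInf fun n => by
        have h1 := hφle n t
        have h2 := hψmod n t' t ht
        linarith
      linarith
    · have hkey : φ t' - 2 * M * (mκ t - mκ t') ≤ φ t := le_ciInf fun n => by
        have h1 := hφle n t'
        have h2 := hψmod' n t' t ht
        rw [Real.norm_eq_abs, abs_sub_le_iff] at h2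
        linarith [h2.2]
      linarith
  have hφcont : Continuous φ := continuous_of_integral_mod hmκcont (2 * M) (by linarith) hφmod'
  have hφrec : ∀ j : ℕ, ∀ t ∈ Set.Icc u v,
      φ t ≤ ε j * Kuv + ∫ s in u..t, (L j * κ s) * φ s := by
    intro j t ht
    have hIo : Set.uIoc u t = Set.Ioc u t := Set.uIoc_of_le ht.1
    have hκm : MeasureTheory.AEStronglyMeasurable κ (volume.restrict (Set.uIoc u t)) := by
      rw [hIo]
      exact (hκi' u t humem ht).1.aestronglyMeasurable
    have hlim : Tendsto (fun n => ∫ s in u..t, (L j * κ s) * ψ n s) atTop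
        (𝓝 (∫ s in u..t, (L j * κ s) * φ s)) := by
      apply intervalIntegral.tendsto_integral_filter_of_dominated_convergence
        (bound := fun s => (L j * κ s) * (2 * R))
      · exact Filter.Eventually.of_forall fun n =>
          ((hκm.const_mul (L j)).mul (hψcont n).aestronglyMeasurable)
      · refine Filter.Eventually.of_forall fun n => MeasureTheory.ae_of_all _ fun s _ => ?_
        have hLκ : 0 ≤ L j * κ s := mul_nonneg (hL j) (hκ0 s)
        rw [Real.norm_eq_abs, abs_of_nonneg (mul_nonneg hLκ (hψ0 n s))]
        exact mul_le_mul_of_nonneg_left (hψle2R n s) hLκ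
      · exact ((hκi' u t humem ht).const_mul (L j)).mul_const (2 * R)
      · exact MeasureTheory.ae_of_all _ fun s _ => (hφtend s).const_mul (L j * κ s)
    have hle : ∀ n : ℕ, φ t ≤ ε j * Kuv + ∫ s in u..t, (L j * κ s) * ψ n s := fun n =>
      (hφle (n + 1) t).trans (hψrec j n t ht)
    exact ge_of_tendsto (tendsto_const_nhds.add hlim) (Filter.Eventually.of_forall hle)
  have hgron : ∀ h : ℝ → ℝ, Continuous h → (∀ t, 0 ≤ h t) →
      (∀ j : ℕ, ∀ t ∈ Set.Icc u v, h t ≤ ε j * Kuv + ∫ s in u..t, (L j * κ s) * h s) →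
      ∀ t ∈ Set.Icc u v, h t ≤ 0 := by
    intro h hc h0 hrec t ht
    have key : ∀ j : ℕ, h t ≤ Kuv * (ε j * (2:ℝ) ^ (2 * L j * Q₀ + 2)) := by
      intro j
      have haj : 0 ≤ ε j * Kuv := mul_nonneg (hε j) hKuv0
      set nj : ℕ := ⌈2 * L j * Q₀⌉₊ with hnj
      have hκ'int : IntervalIntegrable (fun s => L j * κ s) volume u v :=
        (hκi' u v humem hvmem).const_mul _
      have hκ'0 : ∀ s, 0 ≤ L j * κ s := fun s => mul_nonneg (hL j) (hκ0 s)
      have hKcond : (∫ s in u..t, L j * κ s) ≤ ((nj : ℝ) + 1) / 2 := by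
        rw [intervalIntegral.integral_const_mul]
        have h1 : (∫ s in u..t, κ s) ≤ Q₀ := (Kmono t v ht hvmem ht.2).trans hQ
        have h2 : L j * (∫ s in u..t, κ s) ≤ L j * Q₀ := mul_le_mul_of_nonneg_left h1 (hL j)
        have h3 : 2 * L j * Q₀ ≤ (nj : ℝ) := Nat.le_ceil _
        linarith
      obtain ⟨h1, -⟩ := gronwall_pair u v huv _ hκ'int hκ'0 h hc.continuousOn
        (fun r _ => h0 r) (ε j * Kuv) haj (hrec j) nj t ht hKcond
      have hQ₀L : 0 ≤ 2 * L j * Q₀ := by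
        have := hL j
        positivity
      have hb : ((2:ℝ)) ^ nj ≤ (2:ℝ) ^ ((2 * L j * Q₀ + 1 : ℝ)) := by
        rw [← Real.rpow_natCast 2 nj]
        apply Real.rpow_le_rpow_of_exponent_le one_le_two
        have := Nat.ceil_lt_add_one hQ₀L
        rw [hnj]
        linarith
      have e : (2:ℝ) ^ ((2 * L j * Q₀ + 2 : ℝ)) = (2:ℝ) ^ ((2 * L j * Q₀ + 1 : ℝ)) * 2 := by
        rw [show (2 * L j * Q₀ + 2 : ℝ) = (2 * L j * Q₀ + 1) + 1 by ring,
          Real.rpow_add_one two_ne_zero]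
      calc h t ≤ 2 * (ε j * Kuv) * 2 ^ nj := h1
        _ ≤ 2 * (ε j * Kuv) * (2:ℝ) ^ ((2 * L j * Q₀ + 1 : ℝ)) :=
            mul_le_mul_of_nonneg_left hb (by positivity)
        _ = Kuv * (ε j * (2:ℝ) ^ ((2 * L j * Q₀ + 2 : ℝ))) := by rw [e]; ring
    have hlim0 : Tendsto (fun j => Kuv * (ε j * (2:ℝ) ^ (2 * L j * Q₀ + 2))) atTop
        (𝓝 (Kuv * 0)) := hsmall.const_mul Kuv
    rw [mul_zero] at hlim0
    exact ge_of_tendsto hlim0 (Filter.Eventually.of_forall key)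
  have hφzero : ∀ t, φ t = 0 := by
    have h1 : ∀ t ∈ Set.Icc u v, φ t = 0 := fun t ht =>
      le_antisymm (hgron φ hφcont hφ0 hφrec t ht) (hφ0 t)
    intro t
    have h2 : φ t = φ (cl t) := by
      simp only [hφ]
      exact iInf_congr fun n => hψcl n t
    rw [h2]
    exact h1 _ (hclmem t)
  have hcauchy : ∀ t, CauchySeq (fun n => F n t) := by
    intro t
    apply cauchySeq_of_le_tendsto_0 (fun n => ψ n t)
    · intro n1 n2 N h1 h2
      have e1 : n1 = N + (n1 - N) := by omega
      have e2 : n2 = N + (n2 - N) := by omega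
      rw [dist_eq_norm, e1, e2]
      exact hψled N t (n1 - N, n2 - N)
    · have := hφtend t
      rwa [hφzero t] at this
  choose flim hflim using fun t => cauchySeq_tendsto_of_complete (hcauchy t)
  have hflimcl : ∀ t, flim t = flim (cl t) := by
    intro t
    refine tendsto_nhds_unique (hflim t) ((hflim (cl t)).congr fun n => (hFcl n t).symm)
  have hflimbd : ∀ t, ‖flim t‖ ≤ R := fun t =>
    le_of_tendsto (hflim t).norm (Filter.Eventually.of_forall fun n => hFbd n t)
  have hflimmod : ∀ t' t : ℝ, t' ≤ t → ‖flim t - flim t'‖ ≤ M * (mκ t - mκ t') := fun t' t ht =>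
    le_of_tendsto ((hflim t).sub (hflim t')).norm
      (Filter.Eventually.of_forall fun n => hFmod n t' t ht)
  have hflimcont : Continuous flim := continuous_of_integral_mod hmκcont M hM hflimmod
  have hflimeq : ∀ t ∈ Set.Icc u v, flim t = ξ + ∫ s in u..t, V (flim s) s := by
    intro t ht
    have hIo : Set.uIoc u t = Set.Ioc u t := Set.uIoc_of_le ht.1
    have hL1 : Tendsto (fun n => F (n + 1) t) atTop (𝓝 (flim t)) :=
      (hflim t).comp (Filter.tendsto_add_atTop_nat 1)
    have hInt : Tendsto (fun n => ∫ s in u..t, V (F n s) s) atTop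
        (𝓝 (∫ s in u..t, V (flim s) s)) := by
      apply intervalIntegral.tendsto_integral_filter_of_dominated_convergence
        (bound := fun s => M * κ s)
      · refine Filter.Eventually.of_forall fun n => ?_
        have := (hVi' _ (hFcont n) u t humem ht).1.aestronglyMeasurable
        rwa [← hIo] at this
      · exact Filter.Eventually.of_forall fun n => MeasureTheory.ae_of_all _ fun s _ => hVbd _ s
      · exact (hκi' u t humem ht).const_mul M
      · exact MeasureTheory.ae_of_all _ fun s _ =>
          (((hVcont s).tendsto (flim s)).comp (hflim s))
    have hsum : Tendsto (fun n => ξ + ∫ s in u..t, V (F n s) s) atTop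
        (𝓝 (ξ + ∫ s in u..t, V (flim s) s)) := tendsto_const_nhds.add hInt
    refine tendsto_nhds_unique hL1 (hsum.congr fun n => ?_)
    rw [hFsucc n]
    simp only [hP]
    rw [hclid t ht]
  have hbdsol : ∀ (f : ℝ → E), Continuous f →
      (∀ t ∈ Set.Icc u v, f t = ξ + ∫ s in u..t, V (f s) s) →
      ∀ t ∈ Set.Icc u v, ‖f t‖ ≤ R := by
    intro f hf he t ht
    rw [he t ht]
    have hb : ‖∫ s in u..t, V (f s) s‖ ≤ |∫ s in u..t, M * κ s| :=
      intervalIntegral.norm_integral_le_abs_of_norm_le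
        (Filter.Eventually.of_forall fun s => hVbd (f s) s)
        ((hκi' u t humem ht).const_mul M)
    have e2 : (∫ s in u..t, M * κ s) = M * K t := by
      rw [intervalIntegral.integral_const_mul, Kadd u t humem ht, hKu, sub_zero]
    have e3 : K t ≤ Kuv := Kmono t v ht hvmem ht.2
    have e4 : 0 ≤ M * K t := by
      have h5 := Kmono u t humem ht ht.1
      rw [hKu] at h5
      exact mul_nonneg hM h5
    rw [e2, abs_of_nonneg e4] at hb
    calc ‖ξ + ∫ s in u..t, V (f s) s‖ ≤ ‖ξ‖ + ‖∫ s in u..t, V (f s) s‖ := norm_add_le _ _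
      _ ≤ R := by nlinarith
  have huniq : ∀ f₁ f₂ : ℝ → E,
      (Continuous f₁ ∧ (∀ t, f₁ t = f₁ (cl t)) ∧
        ∀ t ∈ Set.Icc u v, f₁ t = ξ + ∫ s in u..t, V (f₁ s) s) →
      (Continuous f₂ ∧ (∀ t, f₂ t = f₂ (cl t)) ∧
        ∀ t ∈ Set.Icc u v, f₂ t = ξ + ∫ s in u..t, V (f₂ s) s) → f₁ = f₂ := by
    rintro f₁ f₂ ⟨hc1, hcl1, he1⟩ ⟨hc2, hcl2, he2⟩
    set h : ℝ → ℝ := fun t => ‖f₁ t - f₂ t‖ with hh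
    have hhc : Continuous h := (hc1.sub hc2).norm
    have hrec : ∀ j : ℕ, ∀ t ∈ Set.Icc u v,
        h t ≤ ε j * Kuv + ∫ s in u..t, (L j * κ s) * h s := by
      intro j t ht
      have hIo : Set.uIoc u t = Set.Ioc u t := Set.uIoc_of_le ht.1
      have hiV₁ := hVi' f₁ hc1 u t humem ht
      have hiV₂ := hVi' f₂ hc2 u t humem ht
      have hih : IntervalIntegrable (fun s => (L j * κ s) * h s) volume u t :=
        ((hκi' u t humem ht).const_mul _).mul_continuousOn hhc.continuousOn
      have hiε : IntervalIntegrable (fun s => ε j * κ s) volume u t :=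
        (hκi' u t humem ht).const_mul _
      have e : f₁ t - f₂ t = ∫ s in u..t, (V (f₁ s) s - V (f₂ s) s) := by
        rw [he1 t ht, he2 t ht, intervalIntegral.integral_sub hiV₁ hiV₂]
        abel
      have hb : h t ≤ |∫ s in u..t, ((L j * κ s) * h s + ε j * κ s)| := by
        show ‖f₁ t - f₂ t‖ ≤ _
        rw [e]
        refine intervalIntegral.norm_integral_le_abs_of_norm_le ?_ (hih.add hiε)
        refine ((MeasureTheory.ae_restrict_mem measurableSet_uIoc).mono fun s hs => ?_)
        rw [hIo] at hs
        have hsmem : s ∈ Set.Icc u v := ⟨hs.1.le, hs.2.trans ht.2⟩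
        exact hdiff j _ _ s (hbdsol f₁ hc1 he1 s hsmem) (hbdsol f₂ hc2 he2 s hsmem)
      have habs : |∫ s in u..t, ((L j * κ s) * h s + ε j * κ s)|
          = ∫ s in u..t, ((L j * κ s) * h s + ε j * κ s) := by
        refine abs_of_nonneg (intervalIntegral.integral_nonneg ht.1 fun s _ => ?_)
        exact add_nonneg (mul_nonneg (mul_nonneg (hL j) (hκ0 s)) (norm_nonneg _))
          (mul_nonneg (hε j) (hκ0 s))
      rw [habs, intervalIntegral.integral_add hih hiε,
        intervalIntegral.integral_const_mul] at hb
      have hκb : (∫ s in u..t, κ s) ≤ Kuv := Kmono t v ht hvmem ht.2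
      have hεb : ε j * (∫ s in u..t, κ s) ≤ ε j * Kuv := mul_le_mul_of_nonneg_left hκb (hε j)
      linarith [hb]
    have hzero : ∀ t ∈ Set.Icc u v, h t = 0 := fun t ht =>
      le_antisymm (hgron h hhc (fun r => norm_nonneg _) hrec t ht) (norm_nonneg _)
    funext t
    have h1 : f₁ (cl t) = f₂ (cl t) := by
      have h2 := hzero (cl t) (hclmem t)
      simp only [hh] at h2
      exact sub_eq_zero.mp (norm_eq_zero.mp h2)
    rw [hcl1 t, hcl2 t, h1]
  exact ⟨flim, ⟨hflimcont, hflimcl, hflimeq⟩,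
    fun f' hf' => huniq f' flim hf' ⟨hflimcont, hflimcl, hflimeq⟩⟩

lemma ode_global {E : Type*} [NormedAddCommGroup E] [NormedSpace ℝ E] [CompleteSpace E]
    (T : ℝ) (hT : 0 ≤ T) (V : E → ℝ → E) (κ : ℝ → ℝ) (hκ1 : ∀ s, (1:ℝ) ≤ κ s)
    (hκint : IntervalIntegrable κ volume 0 T)
    (hVcont : ∀ s, Continuous fun z => V z s)
    (hVint : ∀ f : ℝ → E, Continuous f →
      IntervalIntegrable (fun s => V (f s) s) volume 0 T)
    (M : ℝ) (hM : 0 ≤ M) (hVbd : ∀ z s, ‖V z s‖ ≤ M * κ s)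
    (x : E) (R : ℝ)
    (hR : ‖x‖ + M * (∫ s in (0:ℝ)..T, κ s) ≤ R)
    (L ε : ℕ → ℝ) (hL : ∀ n, 0 ≤ L n) (hε : ∀ n, 0 ≤ ε n)
    (hdiff : ∀ (n : ℕ) (z w : E) (s : ℝ), ‖z‖ ≤ R → ‖w‖ ≤ R →
      ‖V z s - V w s‖ ≤ L n * κ s * ‖z - w‖ + ε n * κ s)
    (Q₀ : ℝ) (hQ₀ : 0 < Q₀)
    (hsmall : Tendsto (fun n => ε n * (2:ℝ) ^ (2 * L n * Q₀ + 2)) atTop (𝓝 0)) :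
    ∃! f : ℝ → E, Continuous f ∧ (∀ t, f t = f (max 0 (min T t))) ∧
      ∀ t ∈ Set.Icc 0 T, f t = x + ∫ s in (0:ℝ)..t, V (f s) s := by
  classical
  have hκ0 : ∀ s, 0 ≤ κ s := fun s => zero_le_one.trans (hκ1 s)
  have clmem : ∀ a b t : ℝ, a ≤ b → max a (min b t) ∈ Set.Icc a b := fun a b t hab =>
    ⟨le_max_left _ _, max_le hab (min_le_left _ _)⟩
  have clid : ∀ a b t : ℝ, t ∈ Set.Icc a b → max a (min b t) = t := fun a b t ht => by
    rw [min_eq_right ht.2, max_eq_right ht.1]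
  have hsubT : ∀ c d : ℝ, c ∈ Set.Icc 0 T → d ∈ Set.Icc 0 T →
      Set.uIcc c d ⊆ Set.uIcc 0 T := by
    intro c d hc hd
    rw [Set.uIcc_of_le hT]
    exact Set.uIcc_subset_Icc hc hd
  have h0mem : (0:ℝ) ∈ Set.Icc (0:ℝ) T := ⟨le_rfl, hT⟩
  have hTmem : T ∈ Set.Icc (0:ℝ) T := ⟨hT, le_rfl⟩
  have hκi' : ∀ c d : ℝ, c ∈ Set.Icc 0 T → d ∈ Set.Icc 0 T →
      IntervalIntegrable κ volume c d := fun c d hc hd => hκint.mono_set (hsubT c d hc hd)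
  have hVi' : ∀ (f : ℝ → E), Continuous f → ∀ c d : ℝ, c ∈ Set.Icc 0 T → d ∈ Set.Icc 0 T →
      IntervalIntegrable (fun s => V (f s) s) volume c d := fun f hf c d hc hd =>
    (hVint f hf).mono_set (hsubT c d hc hd)
  set K0 : ℝ → ℝ := fun r => ∫ s in (0:ℝ)..r, κ s with hK0def
  have hK00 : K0 0 = 0 := intervalIntegral.integral_same
  have K0add : ∀ c d : ℝ, c ∈ Set.Icc 0 T → d ∈ Set.Icc 0 T →
      (∫ s in c..d, κ s) = K0 d - K0 c := by
    intro c d hc hd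
    have := intervalIntegral.integral_add_adjacent_intervals (hκi' 0 c h0mem hc)
      (hκi' c d hc hd)
    simp only [hK0def]
    linarith
  have K0mono : ∀ c d : ℝ, c ∈ Set.Icc 0 T → d ∈ Set.Icc 0 T → c ≤ d → K0 c ≤ K0 d := by
    intro c d hc hd hcd
    have h0 : 0 ≤ ∫ s in c..d, κ s := intervalIntegral.integral_nonneg hcd (fun s _ => hκ0 s)
    rw [K0add c d hc hd] at h0
    linarith
  have hκIcc : IntegrableOn κ (Set.uIcc 0 T) volume := by
    rw [Set.uIcc_of_le hT, integrableOn_Icc_iff_integrableOn_Ioc]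
    exact (hκi' 0 T h0mem hTmem).1
  have K0cont : ContinuousOn K0 (Set.Icc 0 T) := by
    have := intervalIntegral.continuousOn_primitive_interval hκIcc
    rwa [Set.uIcc_of_le hT] at this
  have hK0nn : ∀ c, c ∈ Set.Icc 0 T → 0 ≤ K0 c := by
    intro c hc
    have := K0mono 0 c h0mem hc hc.1
    rwa [hK00] at this
  -- a priori bound for solutions
  have hsol : ∀ w, w ∈ Set.Icc 0 T → ∀ f : ℝ → E, Continuous f →
      (∀ t ∈ Set.Icc 0 w, f t = x + ∫ s in (0:ℝ)..t, V (f s) s) →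
      ∀ t ∈ Set.Icc 0 w, ‖f t‖ ≤ ‖x‖ + M * K0 t := by
    intro w hw f hf he t ht
    have htT : t ∈ Set.Icc 0 T := ⟨ht.1, ht.2.trans hw.2⟩
    rw [he t ht]
    have hb : ‖∫ s in (0:ℝ)..t, V (f s) s‖ ≤ |∫ s in (0:ℝ)..t, M * κ s| :=
      intervalIntegral.norm_integral_le_abs_of_norm_le
        (Filter.Eventually.of_forall fun s => hVbd (f s) s)
        ((hκi' 0 t h0mem htT).const_mul M)
    have e2 : (∫ s in (0:ℝ)..t, M * κ s) = M * K0 t := by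
      rw [intervalIntegral.integral_const_mul, K0add 0 t h0mem htT, hK00, sub_zero]
    have e4 : 0 ≤ M * K0 t := mul_nonneg hM (hK0nn t htT)
    rw [e2, abs_of_nonneg e4] at hb
    calc ‖x + ∫ s in (0:ℝ)..t, V (f s) s‖ ≤ ‖x‖ + ‖∫ s in (0:ℝ)..t, V (f s) s‖ :=
          norm_add_le _ _
      _ ≤ ‖x‖ + M * K0 t := by linarith
  have main : ∀ n : ℕ, ∀ w, w ∈ Set.Icc 0 T → K0 w ≤ n * Q₀ →
      ∃! f : ℝ → E, Continuous f ∧ (∀ t, f t = f (max 0 (min w t))) ∧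
        ∀ t ∈ Set.Icc 0 w, f t = x + ∫ s in (0:ℝ)..t, V (f s) s := by
    intro n
    induction n with
    | zero =>
      intro w hw hK
      have hw0 : w = 0 := by
        have h1 : w ≤ K0 w := by
          have : (∫ s in (0:ℝ)..w, (1:ℝ)) ≤ ∫ s in (0:ℝ)..w, κ s :=
            intervalIntegral.integral_mono_on hw.1 intervalIntegrable_const
              (hκi' 0 w h0mem hw) (fun s _ => hκ1 s)
          simpa using this
        have h2 : K0 w ≤ 0 := by simpa using hK
        linarith [hw.1]
      subst hw0
      refine ⟨fun _ => x, ⟨continuous_const, fun t => rfl, fun t ht => ?_⟩, ?_⟩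
      · have ht0 : t = 0 := le_antisymm ht.2 ht.1
        subst ht0
        rw [intervalIntegral.integral_same, add_zero]
      · rintro f' ⟨hc', hcl', he'⟩
        funext t
        have h1 : max 0 (min 0 t) = 0 := max_eq_left (min_le_left 0 t)
        have h2 := he' 0 ⟨le_rfl, le_rfl⟩
        rw [intervalIntegral.integral_same, add_zero] at h2
        rw [hcl' t, h1, h2]
    | succ n ih =>
      intro w hw hK
      by_cases hcase : K0 w ≤ n * Q₀
      · exact ih w hw hcase
      · push_neg at hcase
        have hnQ : 0 ≤ (n : ℝ) * Q₀ := mul_nonneg (Nat.cast_nonneg n) hQ₀.le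
        obtain ⟨w₀, hw₀, hKw₀⟩ := intermediate_value_Icc hw.1
          (K0cont.mono (Set.Icc_subset_Icc le_rfl hw.2))
          (⟨by rw [hK00]; exact hnQ, hcase.le⟩ : (n : ℝ) * Q₀ ∈ Set.Icc (K0 0) (K0 w))
        have hw₀T : w₀ ∈ Set.Icc 0 T := ⟨hw₀.1, hw₀.2.trans hw.2⟩
        have hw₀w : w₀ ≤ w := hw₀.2
        have hw₀0 : 0 ≤ w₀ := hw₀.1
        obtain ⟨f₀, ⟨hf₀c, hf₀cl, hf₀eq⟩, huniq₀⟩ := ih w₀ hw₀T (le_of_eq hKw₀)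
        set ξ : E := f₀ w₀ with hξdef
        have hξbd : ‖ξ‖ ≤ ‖x‖ + M * K0 w₀ :=
          hsol w₀ hw₀T f₀ hf₀c hf₀eq w₀ ⟨hw₀0, le_rfl⟩
        have hQblock : (∫ s in w₀..w, κ s) ≤ Q₀ := by
          rw [K0add w₀ w hw₀T hw, hKw₀]
          push_cast at hK ⊢
          linarith
        have hξcond : ‖ξ‖ + M * (∫ s in w₀..w, κ s) ≤ R := by
          have e1 : (∫ s in w₀..w, κ s) = K0 w - K0 w₀ := K0add w₀ w hw₀T hw
          have e2 : K0 w ≤ K0 T := K0mono w T hw hTmem hw.2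
          have e3 : M * (K0 w - K0 w₀) ≤ M * K0 w - M * K0 w₀ := by ring_nf; exact le_rfl
          rw [e1]
          nlinarith [mul_nonneg hM (hK0nn w hw)]
        obtain ⟨Y, ⟨hYc, hYcl, hYeq⟩, huniqY⟩ := ode_local T V κ hκ1 hκint hVcont hVint
          M hM hVbd R L ε hL hε hdiff Q₀ hQ₀.le hsmall w₀ w hw₀0 hw₀w hw.2 hQblock ξ hξcond
        have hmatch : f₀ w₀ = Y w₀ := by
          rw [hYeq w₀ ⟨le_rfl, hw₀w⟩, intervalIntegral.integral_same, add_zero]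
        set f : ℝ → E := fun t => if t ≤ w₀ then f₀ t else Y t with hfdef
        have hfeqf₀ : ∀ t, t ≤ w₀ → f t = f₀ t := fun t h => if_pos h
        have hfeqY : ∀ t, w₀ ≤ t → f t = Y t := by
          intro t hge
          by_cases h : t ≤ w₀
          · have : t = w₀ := le_antisymm h hge
            subst this
            rw [hfeqf₀ t le_rfl, hmatch]
          · exact if_neg h
        have hfc : Continuous f := by
          refine Continuous.if_le hf₀c hYc continuous_id continuous_const ?_
          intro t ht
          rw [ht, hmatch]
        have hfcl : ∀ t, f t = f (max 0 (min w t)) := by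
          intro t
          by_cases h : t ≤ w₀
          · have e1 : min w t = t := min_eq_right (h.trans hw₀w)
            have e2 : min w₀ t = t := min_eq_right h
            have e3 : max 0 (min w t) ≤ w₀ := by
              rw [e1]
              exact max_le hw₀0 h
            rw [hfeqf₀ t h, hfeqf₀ _ e3, hf₀cl t, e1, e2]
          · push_neg at h
            have hge : w₀ ≤ t := h.le
            have e1 : w₀ ≤ min w t := le_min hw₀w hge
            have e2 : max 0 (min w t) = min w t := max_eq_right (hw₀0.trans e1)
            have e3 : max w₀ (min w t) = min w t := max_eq_right e1
            have e4 : w₀ ≤ max 0 (min w t) := by rw [e2]; exact e1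
            rw [hfeqY t hge, hfeqY _ e4, hYcl t, e2, e3]
        have hfeq : ∀ t ∈ Set.Icc 0 w, f t = x + ∫ s in (0:ℝ)..t, V (f s) s := by
          intro t ht
          have htT : t ∈ Set.Icc 0 T := ⟨ht.1, ht.2.trans hw.2⟩
          by_cases h : t ≤ w₀
          · have hcongr : Set.EqOn (fun s => V (f s) s) (fun s => V (f₀ s) s)
                (Set.uIcc 0 t) := by
              intro s hs
              rw [Set.uIcc_of_le ht.1] at hs
              have : f s = f₀ s := hfeqf₀ s (hs.2.trans h)
              simp only [this]
            rw [intervalIntegral.integral_congr hcongr, ← hf₀eq t ⟨ht.1, h⟩,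
              hfeqf₀ t h]
          · push_neg at h
            have hsplit := intervalIntegral.integral_add_adjacent_intervals
              (hVi' f hfc 0 w₀ h0mem hw₀T) (hVi' f hfc w₀ t hw₀T htT)
            have hc1 : Set.EqOn (fun s => V (f s) s) (fun s => V (f₀ s) s)
                (Set.uIcc 0 w₀) := by
              intro s hs
              rw [Set.uIcc_of_le hw₀0] at hs
              have : f s = f₀ s := hfeqf₀ s hs.2
              simp only [this]
            have hc2 : Set.EqOn (fun s => V (f s) s) (fun s => V (Y s) s)
                (Set.uIcc w₀ t) := by
              intro s hs
              rw [Set.uIcc_of_le h.le] at hs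
              have : f s = Y s := hfeqY s hs.1
              simp only [this]
            have e1 : (∫ s in (0:ℝ)..w₀, V (f s) s) = ∫ s in (0:ℝ)..w₀, V (f₀ s) s :=
              intervalIntegral.integral_congr hc1
            have e2 : (∫ s in w₀..t, V (f s) s) = ∫ s in w₀..t, V (Y s) s :=
              intervalIntegral.integral_congr hc2
            have e3 : x + ∫ s in (0:ℝ)..w₀, V (f₀ s) s = ξ :=
              (hf₀eq w₀ ⟨hw₀0, le_rfl⟩).symm
            rw [hfeqY t h.le, hYeq t ⟨h.le, ht.2⟩, ← hsplit, e1, e2]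
            rw [← add_assoc, e3]
        refine ⟨f, ⟨hfc, hfcl, hfeq⟩, ?_⟩
        rintro f' ⟨hc', hcl', he'⟩
        -- restriction of f' to [0, w₀]
        set f₀' : ℝ → E := fun t => f' (max 0 (min w₀ t)) with hf₀'def
        have hf₀'c : Continuous f₀' :=
          hc'.comp (continuous_const.max (continuous_const.min continuous_id))
        have hf₀'cl : ∀ t, f₀' t = f₀' (max 0 (min w₀ t)) := by
          intro t
          simp only [hf₀'def]
          rw [clid 0 w₀ _ (clmem 0 w₀ t hw₀0)]
        have hf₀'id : ∀ t ∈ Set.Icc 0 w₀, f₀' t = f' t := by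
          intro t ht
          simp only [hf₀'def]
          rw [clid 0 w₀ t ht]
        have hf₀'eq : ∀ t ∈ Set.Icc 0 w₀, f₀' t = x + ∫ s in (0:ℝ)..t, V (f₀' s) s := by
          intro t ht
          have hcongr : Set.EqOn (fun s => V (f₀' s) s) (fun s => V (f' s) s)
              (Set.uIcc 0 t) := by
            intro s hs
            rw [Set.uIcc_of_le ht.1] at hs
            have : f₀' s = f' s := hf₀'id s ⟨hs.1, hs.2.trans ht.2⟩
            simp only [this]
          rw [hf₀'id t ht, intervalIntegral.integral_congr hcongr]
          exact he' t ⟨ht.1, ht.2.trans hw₀w⟩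
        have hf₀'f₀ : f₀' = f₀ := huniq₀ f₀' ⟨hf₀'c, hf₀'cl, hf₀'eq⟩
        have hf'w₀ : f' w₀ = ξ := by
          have := hf₀'id w₀ ⟨hw₀0, le_rfl⟩
          rw [← this, hf₀'f₀]
        -- restriction of f' to [w₀, w]
        set Y' : ℝ → E := fun t => f' (max w₀ (min w t)) with hY'def
        have hY'c : Continuous Y' :=
          hc'.comp (continuous_const.max (continuous_const.min continuous_id))
        have hY'cl : ∀ t, Y' t = Y' (max w₀ (min w t)) := by
          intro t
          simp only [hY'def]
          rw [clid w₀ w _ (clmem w₀ w t hw₀w)]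
        have hY'id : ∀ t ∈ Set.Icc w₀ w, Y' t = f' t := by
          intro t ht
          simp only [hY'def]
          rw [clid w₀ w t ht]
        have hY'eq : ∀ t ∈ Set.Icc w₀ w, Y' t = ξ + ∫ s in w₀..t, V (Y' s) s := by
          intro t ht
          have htT : t ∈ Set.Icc 0 T := ⟨hw₀0.trans ht.1, ht.2.trans hw.2⟩
          have hsplit := intervalIntegral.integral_add_adjacent_intervals
            (hVi' f' hc' 0 w₀ h0mem hw₀T) (hVi' f' hc' w₀ t hw₀T htT)
          have hcongr : Set.EqOn (fun s => V (f' s) s) (fun s => V (Y' s) s)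
              (Set.uIcc w₀ t) := by
            intro s hs
            rw [Set.uIcc_of_le ht.1] at hs
            have : Y' s = f' s := hY'id s ⟨hs.1, hs.2.trans ht.2⟩
            simp only [this]
          have e1 : x + ∫ s in (0:ℝ)..w₀, V (f' s) s = f' w₀ :=
            (he' w₀ ⟨hw₀0, hw₀w.trans (le_refl w)⟩).symm
          rw [hY'id t ht, he' t ⟨hw₀0.trans ht.1, ht.2⟩, ← hsplit, ← add_assoc, e1,
            hf'w₀, intervalIntegral.integral_congr hcongr]
        have hY'Y : Y' = Y := huniqY Y' ⟨hY'c, hY'cl, hY'eq⟩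
        funext t
        have hclw : max 0 (min w t) ∈ Set.Icc 0 w := clmem 0 w t (hw₀0.trans hw₀w)
        set c : ℝ := max 0 (min w t) with hcdef
        have hstep : f' c = f c := by
          by_cases h : c ≤ w₀
          · have h1 : f' c = f₀' c := (hf₀'id c ⟨hclw.1, h⟩).symm
            rw [h1, hf₀'f₀, ← hfeqf₀ c h]
          · push_neg at h
            have h1 : f' c = Y' c := (hY'id c ⟨h.le, hclw.2⟩).symm
            rw [h1, hY'Y, ← hfeqY c h.le]
        rw [hcl' t, hfcl t, hstep]
  obtain ⟨n, hn⟩ := exists_nat_ge (K0 T / Q₀)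
  refine main n T hTmem ?_
  rw [div_le_iff₀ hQ₀] at hn
  linarith


lemma continuous_mulVecE2 {d m : ℕ} :
    Continuous fun p : Matrix (Fin d) (Fin m) ℝ × EuclideanSpace ℝ (Fin m) =>
      mulVecE p.1 p.2 := by
  have h1 : Continuous fun p : Matrix (Fin d) (Fin m) ℝ × EuclideanSpace ℝ (Fin m) =>
      (fun i => ∑ j, p.1 i j * p.2 j : Fin d → ℝ) := by
    apply continuous_pi
    intro i
    refine continuous_finset_sum _ fun j _ => ?_
    exact (((continuous_apply j).comp ((continuous_apply i).comp continuous_fst))).mul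
      ((continuous_apply j).comp
        ((EuclideanSpace.equiv (Fin m) ℝ).continuous.comp continuous_snd))
  exact ((EuclideanSpace.equiv (Fin d) ℝ).symm.continuous).comp h1

set_option maxHeartbeats 2000000 in
/-- Existence and uniqueness of the solution of the controlled (skeleton) ODE
`X(t) = x + ∫₀ᵗ (σ(X(s))·g(s) + b(X(s))) ds` on `[0, T]`, for bounded continuous
coefficients satisfying hypothesis (H1) and a measurable control derivative `g`
with finite energy `∫₀ᵀ |g|² < ∞`. -/
theorem skeleton_ODE_exists_unique (d m : ℕ)
    (σ : EuclideanSpace ℝ (Fin d) → Matrix (Fin d) (Fin m) ℝ)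
    (b : EuclideanSpace ℝ (Fin d) → EuclideanSpace ℝ (Fin d))
    (hσc : Continuous σ) (hbc : Continuous b)
    (M : ℝ) (hσbd : ∀ z, frobNorm (σ z) ≤ M) (hbbd : ∀ z, ‖b z‖ ≤ M)
    (C μ : ℝ) (hC : 0 < C) (hμ : 0 < μ) (hH1 : HypH1 σ b C μ)
    (T : ℝ) (hT : 0 < T) (x : EuclideanSpace ℝ (Fin d))
    (g : ℝ → EuclideanSpace ℝ (Fin m)) (hgm : Measurable g)
    (hgi : IntervalIntegrable (fun s => ‖g s‖ ^ 2) MeasureTheory.volume 0 T) :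
    ∃! X : C(Set.Icc (0:ℝ) T, EuclideanSpace ℝ (Fin d)),
      ∀ t : Set.Icc (0:ℝ) T,
        X t = x + ∫ s in (0:ℝ)..(t : ℝ),
          (mulVecE (σ (X (Set.projIcc 0 T hT.le s))) (g s)
            + b (X (Set.projIcc 0 T hT.le s))) := by
  classical
  set V : EuclideanSpace ℝ (Fin d) → ℝ → EuclideanSpace ℝ (Fin d) :=
    fun z s => mulVecE (σ z) (g s) + b z with hVdef
  set κ : ℝ → ℝ := fun s => ‖g s‖ + 1 with hκdef
  have hκ1 : ∀ s, (1:ℝ) ≤ κ s := fun s => by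
    simp only [hκdef]; linarith [norm_nonneg (g s)]
  have hκm : Measurable κ := hgm.norm.add measurable_const
  have hκint : IntervalIntegrable κ volume 0 T := by
    have h2 : IntervalIntegrable (fun s => ‖g s‖ ^ 2 + 2) volume 0 T :=
      hgi.add intervalIntegrable_const
    refine h2.mono_fun hκm.aestronglyMeasurable (Filter.Eventually.of_forall fun s => ?_)
    simp only [hκdef, Real.norm_eq_abs]
    rw [abs_of_nonneg (by positivity), abs_of_nonneg (by positivity)]
    nlinarith [sq_nonneg (‖g s‖ - 1)]
  have hVcont : ∀ s, Continuous fun z => V z s := by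
    intro s
    simp only [hVdef]
    exact (continuous_mulVecE2.comp (hσc.prodMk continuous_const)).add hbc
  have hM0 : 0 ≤ M := (frobNorm_nonneg (σ x)).trans (hσbd x)
  have hVbd : ∀ z s, ‖V z s‖ ≤ M * κ s := by
    intro z s
    simp only [hVdef, hκdef]
    have h1 : ‖mulVecE (σ z) (g s)‖ ≤ M * ‖g s‖ :=
      (norm_mulVecE_le _ _).trans (mul_le_mul_of_nonneg_right (hσbd z) (norm_nonneg _))
    calc ‖mulVecE (σ z) (g s) + b z‖ ≤ ‖mulVecE (σ z) (g s)‖ + ‖b z‖ := norm_add_le _ _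
      _ ≤ M * ‖g s‖ + M := add_le_add h1 (hbbd z)
      _ = M * (‖g s‖ + 1) := by ring
  have hVint : ∀ f : ℝ → EuclideanSpace ℝ (Fin d), Continuous f →
      IntervalIntegrable (fun s => V (f s) s) volume 0 T := by
    intro f hf
    have hgj : ∀ j, Measurable fun s => g s j := fun j =>
      (((continuous_apply j).comp
        (EuclideanSpace.equiv (Fin m) ℝ).continuous).measurable).comp hgm
    have hmeas : Measurable fun s => mulVecE (σ (f s)) (g s) := by
      have h1 : Measurable fun s => (fun i => ∑ j, σ (f s) i j * g s j : Fin d → ℝ) :=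
        measurable_pi_lambda _ fun i => Finset.measurable_sum _ fun j _ =>
          ((((continuous_apply j).comp
            ((continuous_apply i).comp (hσc.comp hf)))).measurable).mul (hgj j)
      exact ((EuclideanSpace.equiv (Fin d) ℝ).symm.continuous.measurable).comp h1
    have hmeas2 : MeasureTheory.AEStronglyMeasurable (fun s => V (f s) s)
        (volume.restrict (Set.uIoc 0 T)) := by
      simp only [hVdef]
      exact (hmeas.add ((hbc.comp hf).measurable)).aestronglyMeasurable
    refine (hκint.const_mul M).mono_fun hmeas2 (Filter.Eventually.of_forall fun s => ?_)
    exact (hVbd (f s) s).trans (le_abs_self _)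
  set R : ℝ := ‖x‖ + M * (∫ s in (0:ℝ)..T, κ s) with hRdef
  set N₀ : ℝ := max R (Real.exp 1 + 1) with hN₀def
  set L : ℕ → ℝ := fun j => C * Real.log (N₀ + j) with hLdef
  set ε : ℕ → ℝ := fun j => C * Real.log (N₀ + j) / (N₀ + j) ^ μ with hεdef
  have hNj : ∀ j : ℕ, Real.exp 1 + 1 ≤ N₀ + j := fun j => by
    have h1 : (0:ℝ) ≤ j := Nat.cast_nonneg j
    have h2 : Real.exp 1 + 1 ≤ N₀ := le_max_right _ _
    linarith
  have hNjpos : ∀ j : ℕ, (0:ℝ) < N₀ + j := fun j =>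
    lt_of_lt_of_le (by positivity) (hNj j)
  have hNjexp : ∀ j : ℕ, Real.exp 1 < N₀ + j := fun j =>
    lt_of_lt_of_le (by linarith) (hNj j)
  have hRN : ∀ j : ℕ, R ≤ N₀ + j := fun j => by
    have h1 : (0:ℝ) ≤ j := Nat.cast_nonneg j
    have h2 : R ≤ N₀ := le_max_left _ _
    linarith
  have hlogNj : ∀ j : ℕ, 1 ≤ Real.log (N₀ + j) := by
    intro j
    rw [Real.le_log_iff_exp_le (hNjpos j)]
    linarith [hNj j]
  have hL0 : ∀ j, 0 ≤ L j := fun j => by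
    simp only [hLdef]
    exact mul_nonneg hC.le (by linarith [hlogNj j])
  have hε0 : ∀ j, 0 ≤ ε j := fun j => by
    simp only [hεdef]
    apply div_nonneg (mul_nonneg hC.le (by linarith [hlogNj j]))
    exact Real.rpow_nonneg (hNjpos j).le μ
  have hdiff : ∀ (j : ℕ) (z w : EuclideanSpace ℝ (Fin d)) (s : ℝ), ‖z‖ ≤ R → ‖w‖ ≤ R →
      ‖V z s - V w s‖ ≤ L j * κ s * ‖z - w‖ + ε j * κ s := by
    intro j z w s hz hw
    obtain ⟨hσd, hbd'⟩ := hH1 (N₀ + j) (hNjexp j) z w (hz.trans (hRN j)) (hw.trans (hRN j))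
    set Nl : ℝ := Real.log (N₀ + j) with hNldef
    have hNl1 : 1 ≤ Nl := hlogNj j
    have hsq : Real.sqrt Nl ≤ Nl := by
      calc Real.sqrt Nl ≤ Real.sqrt (Nl * Nl) := Real.sqrt_le_sqrt (by nlinarith)
        _ = Nl := Real.sqrt_mul_self (by linarith)
    have e0 : V z s - V w s = mulVecE (σ z - σ w) (g s) + (b z - b w) := by
      simp only [hVdef]
      rw [mulVecE_sub]
      abel
    have hg0 : 0 ≤ ‖g s‖ := norm_nonneg _
    have hzw : 0 ≤ ‖z - w‖ := norm_nonneg _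
    have heps : 0 ≤ C * Nl / (N₀ + j) ^ μ :=
      div_nonneg (mul_nonneg hC.le (by linarith)) (Real.rpow_nonneg (hNjpos j).le μ)
    have hb1 : ‖mulVecE (σ z - σ w) (g s)‖
        ≤ (C * Real.sqrt Nl * ‖z - w‖ + C * Nl / (N₀ + j) ^ μ) * ‖g s‖ := by
      refine (norm_mulVecE_le _ _).trans (mul_le_mul_of_nonneg_right ?_ hg0)
      exact hσd
    have hkey : C * Real.sqrt Nl * ‖z - w‖ * ‖g s‖ ≤ C * Nl * ‖z - w‖ * ‖g s‖ := by
      have h1 : 0 ≤ C * ‖z - w‖ * ‖g s‖ := by positivity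
      nlinarith
    calc ‖V z s - V w s‖ ≤ ‖mulVecE (σ z - σ w) (g s)‖ + ‖b z - b w‖ := by
          rw [e0]; exact norm_add_le _ _
      _ ≤ (C * Real.sqrt Nl * ‖z - w‖ + C * Nl / (N₀ + j) ^ μ) * ‖g s‖ +
            (C * Nl * ‖z - w‖ + C * Nl / (N₀ + j) ^ μ) := by
          have := hbd'
          linarith
      _ ≤ L j * κ s * ‖z - w‖ + ε j * κ s := by
          simp only [hLdef, hεdef, hκdef, ← hNldef]
          nlinarith [hkey]
  set Q₀ : ℝ := μ / (4 * C * Real.log 2) with hQdef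
  have hlog2 : 0 < Real.log 2 := Real.log_pos one_lt_two
  have hQ₀pos : 0 < Q₀ := div_pos hμ (by positivity)
  have hsmall : Filter.Tendsto (fun j => ε j * (2:ℝ) ^ (2 * L j * Q₀ + 2))
      Filter.atTop (𝓝 0) := by
    have hid : ∀ j : ℕ, ε j * (2:ℝ) ^ (2 * L j * Q₀ + 2)
        = (8 * C / μ) * (((μ/2) * Real.log (N₀ + j)) *
            Real.exp (-((μ/2) * Real.log (N₀ + j)))) := by
      intro j
      set y : ℝ := Real.log (N₀ + j) with hydef
      have hrw2 : (2:ℝ) ^ (2 * L j * Q₀ + 2) = Real.exp ((μ/2) * y + 2 * Real.log 2) := by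
        rw [Real.rpow_def_of_pos (by norm_num : (0:ℝ) < 2)]
        congr 1
        simp only [hLdef, hQdef, ← hydef]
        field_simp
        ring
      have hrwN : (N₀ + j) ^ μ = Real.exp ((μ/2) * y) * Real.exp ((μ/2) * y) := by
        rw [Real.rpow_def_of_pos (hNjpos j), ← Real.exp_add, ← hydef]
        congr 1
        ring
      have hexp4 : Real.exp (2 * Real.log 2) = 4 := by
        rw [show (2:ℝ) * Real.log 2 = Real.log 2 + Real.log 2 by ring, Real.exp_add,
          Real.exp_log two_pos]
        norm_num
      simp only [hεdef, ← hydef]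
      rw [hrw2, hrwN, Real.exp_add, hexp4, Real.exp_neg]
      have hA : Real.exp ((μ/2) * y) ≠ 0 := Real.exp_ne_zero _
      field_simp
      ring
    have hbase : Filter.Tendsto (fun z : ℝ => z * Real.exp (-z)) Filter.atTop (𝓝 0) := by
      simpa using Real.tendsto_pow_mul_exp_neg_atTop_nhds_zero 1
    have hy : Filter.Tendsto (fun j : ℕ => (μ/2) * Real.log (N₀ + j))
        Filter.atTop Filter.atTop := by
      apply Filter.Tendsto.const_mul_atTop (by positivity : (0:ℝ) < μ/2)
      exact Real.tendsto_log_atTop.comp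
        (tendsto_atTop_add_const_left _ N₀ tendsto_natCast_atTop_atTop)
    have h1 : Filter.Tendsto (fun j : ℕ => ((μ/2) * Real.log (N₀ + j)) *
        Real.exp (-((μ/2) * Real.log (N₀ + j)))) Filter.atTop (𝓝 0) := hbase.comp hy
    have h2 := h1.const_mul (8 * C / μ)
    rw [mul_zero] at h2
    exact h2.congr fun j => (hid j).symm
  obtain ⟨f, ⟨hfc, hfcl, hfeq⟩, huniqf⟩ := ode_global T hT.le V κ hκ1 hκint hVcont hVint
    M hM0 hVbd x R le_rfl L ε hL0 hε0 hdiff Q₀ hQ₀pos hsmall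
  set X : C(Set.Icc (0:ℝ) T, EuclideanSpace ℝ (Fin d)) :=
    ⟨fun t => f ↑t, hfc.comp continuous_subtype_val⟩ with hXdef
  have hXval : ∀ t : Set.Icc (0:ℝ) T, X t = f ↑t := fun t => rfl
  have hproj : ∀ s : ℝ, ((Set.projIcc 0 T hT.le s : Set.Icc (0:ℝ) T) : ℝ)
      = max 0 (min T s) := fun s => rfl
  have hXeq : ∀ t : Set.Icc (0:ℝ) T,
      X t = x + ∫ s in (0:ℝ)..(t : ℝ),
        (mulVecE (σ (X (Set.projIcc 0 T hT.le s))) (g s)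
          + b (X (Set.projIcc 0 T hT.le s))) := by
    intro t
    have hint : (fun s => mulVecE (σ (X (Set.projIcc 0 T hT.le s))) (g s)
        + b (X (Set.projIcc 0 T hT.le s))) = fun s => V (f s) s := by
      funext s
      have h1 : X (Set.projIcc 0 T hT.le s) = f (max 0 (min T s)) := rfl
      rw [h1, ← hfcl s]
    rw [hint, hXval t]
    exact hfeq ↑t t.2
  refine ⟨X, hXeq, ?_⟩
  intro X' hX'
  set f' : ℝ → EuclideanSpace ℝ (Fin d) := fun s => X' (Set.projIcc 0 T hT.le s) with hf'def
  have hf'c : Continuous f' := X'.continuous.comp continuous_projIcc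
  have hf'cl : ∀ t, f' t = f' (max 0 (min T t)) := by
    intro t
    simp only [hf'def]
    congr 1
    have h1 : (max 0 (min T t)) = ((Set.projIcc 0 T hT.le t : Set.Icc (0:ℝ) T) : ℝ) := rfl
    rw [h1, Set.projIcc_val]
  have hf'eq : ∀ t ∈ Set.Icc (0:ℝ) T, f' t = x + ∫ s in (0:ℝ)..t, V (f' s) s := by
    intro t ht
    have h1 : f' t = X' ⟨t, ht⟩ := by
      simp only [hf'def]
      rw [Set.projIcc_of_mem hT.le ht]
    rw [h1]
    have h2 := hX' ⟨t, ht⟩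
    simpa using h2
  have hff' : f' = f := huniqf f' ⟨hf'c, hf'cl, hf'eq⟩
  ext t
  have h1 : X' t = f' ↑t := by
    simp only [hf'def]
    congr 1
    rw [Set.projIcc_val]
  rw [h1, hff']
  rfl
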